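/- Let σ, σs : [0,L] → ℝ be measurable with 0 ≤ σs ≤ σ pointwise and σs essentially bounded by M. Then for any g ∈ ℝ, ∫₀ᴸ σs(t) exp(-∫₀ᵗ σ(s) ds) |g| dt ≤ (1 - e^{-M L}) |g|. -/

import Mathlib

open MeasureTheory intervalIntegral Real Set

/-- Key 1-d lemma: for nonnegative integrable `f` with primitive `F`,
`∫ x in Ioc 0 L, f x * exp (-F x) ≤ 1 - exp (-F L)`. -/
theorem aux_primitive_exp (f : ℝ → ℝ) (L : ℝ) (hL : 0 ≤ L)
    (hf_meas : Measurable f) (hf_nonneg : ∀ x, 0 ≤ f x) (hf_int : Integrable f) :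
    (∫ x in Ioc (0:ℝ) L, f x * Real.exp (-(∫ s in (0:ℝ)..x, f s)))
      ≤ 1 - Real.exp (-(∫ s in (0:ℝ)..L, f s)) := by
  set F : ℝ → ℝ := fun t => ∫ s in (0:ℝ)..t, f s with hF_def
  have hF_sub : ∀ a b : ℝ, F b - F a = ∫ s in a..b, f s := by
    intro a b
    have h := intervalIntegral.integral_add_adjacent_intervals
      (hf_int.intervalIntegrable (a := 0) (b := a))
      (hf_int.intervalIntegrable (a := a) (b := b))
    simp only [hF_def]
    linarith
  have hF_mono : Monotone F := by
    intro a b hab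
    have h1 := hF_sub a b
    have h2 : 0 ≤ ∫ s in a..b, f s :=
      intervalIntegral.integral_nonneg hab fun x _ => hf_nonneg x
    linarith
  have hF_cont : Continuous F := hf_int.continuous_primitive 0
  have hF0 : F 0 = 0 := intervalIntegral.integral_same
  -- the Stieltjes measure of F is `volume.withDensity (ofReal ∘ f)`
  have hsfF : ∀ x, hF_mono.stieltjesFunction x = F x := by
    intro x
    rw [hF_mono.stieltjesFunction_eq]
    exact rightLim_eq_of_tendsto
      (hF_cont.continuousAt.tendsto.mono_left nhdsWithin_le_nhds)
  have hμF : hF_mono.stieltjesFunction.measure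
      = volume.withDensity (fun x => ENNReal.ofReal (f x)) := by
    refine MeasureTheory.Measure.ext_of_Ioc _ _ fun a b hab => ?_
    rw [withDensity_apply _ measurableSet_Ioc, StieltjesFunction.measure_Ioc, hsfF, hsfF]
    rw [hF_sub a b, intervalIntegral.integral_of_le hab.le]
    rw [ofReal_integral_eq_lintegral_ofReal (hf_int.restrict)
      (Filter.Eventually.of_forall fun x => hf_nonneg x)]
  have hF_deriv : ∀ᵐ x, HasDerivAt F (f x) x := by
    have hrn := Measure.rnDeriv_withDensity (volume (α := ℝ)) (hf_meas.ennreal_ofReal)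
    rw [← hμF] at hrn
    filter_upwards [hF_mono.ae_hasDerivAt, hrn] with x hx hx2
    rwa [hx2, ENNReal.toReal_ofReal (hf_nonneg x)] at hx
  -- the function h = -exp(-F)
  set h : ℝ → ℝ := fun t => -Real.exp (-F t) with hh_def
  have hh_mono : Monotone h := by
    intro a b hab
    have := hF_mono hab
    simp only [hh_def, neg_le_neg_iff, Real.exp_le_exp]
    linarith
  have hh_cont : Continuous h := (Real.continuous_exp.comp hF_cont.neg).neg
  have hsfh : ∀ x, hh_mono.stieltjesFunction x = h x := by
    intro x
    rw [hh_mono.stieltjesFunction_eq]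
    exact rightLim_eq_of_tendsto
      (hh_cont.continuousAt.tendsto.mono_left nhdsWithin_le_nhds)
  have hh_deriv : ∀ᵐ x, HasDerivAt h (f x * Real.exp (-F x)) x := by
    filter_upwards [hF_deriv] with x hx
    have h1 : HasDerivAt (fun t => Real.exp (-F t)) (Real.exp (-F x) * (-f x)) x :=
      (hx.neg).exp
    have h2 := h1.neg
    convert h2 using 1
    · rfl
    · rfl
    · rfl
    · ring
  -- identify the integrand with the rnDeriv of the Stieltjes measure of h
  have hunique : (fun x => f x * Real.exp (-F x))
      =ᵐ[volume] fun x => (hh_mono.stieltjesFunction.measure.rnDeriv volume x).toReal := by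
    filter_upwards [hh_deriv, hh_mono.ae_hasDerivAt] with x h1 h2 using h1.unique h2
  have hμh_Ioc : hh_mono.stieltjesFunction.measure (Ioc 0 L)
      = ENNReal.ofReal (h L - h 0) := by
    rw [StieltjesFunction.measure_Ioc, hsfh, hsfh]
  calc ∫ x in Ioc (0:ℝ) L, f x * Real.exp (-F x)
      = ∫ x in Ioc (0:ℝ) L, (hh_mono.stieltjesFunction.measure.rnDeriv volume x).toReal :=
        integral_congr_ae (ae_restrict_of_ae hunique)
    _ ≤ (hh_mono.stieltjesFunction.measure (Ioc 0 L)).toReal := by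
        refine Measure.setIntegral_toReal_rnDeriv_le ?_
        rw [hμh_Ioc]; exact ENNReal.ofReal_ne_top
    _ = h L - h 0 := by
        rw [hμh_Ioc, ENNReal.toReal_ofReal (by linarith [hh_mono hL] : (0:ℝ) ≤ h L - h 0)]
    _ = 1 - Real.exp (-F L) := by
        simp only [hh_def, hF0, neg_zero, Real.exp_zero]
        ring

theorem stmt5 (σ σs : ℝ → ℝ) (L M g : ℝ) (hL : 0 ≤ L)
    (hσmeas : Measurable σ) (hσsmeas : Measurable σs)
    (hσs_nonneg : ∀ s ∈ Icc 0 L, 0 ≤ σs s)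
    (hle : ∀ s ∈ Icc 0 L, σs s ≤ σ s)
    (hM : ∀ᵐ s ∂(volume.restrict (Icc 0 L)), σs s ≤ M)
    (hσint : IntegrableOn σ (Icc 0 L)) :
    (∫ t in (0:ℝ)..L, σs t * Real.exp (-(∫ s in (0:ℝ)..t, σ s)) * |g|)
      ≤ (1 - Real.exp (-(M * L))) * |g| := by
  have hg : (0:ℝ) ≤ |g| := abs_nonneg g
  have hσ_nonneg : ∀ s ∈ Icc 0 L, 0 ≤ σ s := fun s hs => (hσs_nonneg s hs).trans (hle s hs)
  have hσs_int : IntegrableOn σs (Icc 0 L) := by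
    refine Integrable.mono hσint hσsmeas.aestronglyMeasurable.restrict ?_
    rw [ae_restrict_iff' measurableSet_Icc]
    filter_upwards with s hs
    rw [Real.norm_eq_abs, Real.norm_eq_abs, abs_of_nonneg (hσs_nonneg s hs)]
    exact (hle s hs).trans (le_abs_self _)
  set f : ℝ → ℝ := (Icc 0 L).indicator σs with hf_def
  have hf_meas : Measurable f := hσsmeas.indicator measurableSet_Icc
  have hf_nonneg : ∀ x, 0 ≤ f x := by
    intro x
    by_cases hx : x ∈ Icc 0 L
    · rw [hf_def, indicator_of_mem hx]; exact hσs_nonneg x hx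
    · rw [hf_def, indicator_of_notMem hx]
  have hf_int : Integrable f := (integrable_indicator_iff measurableSet_Icc).2 hσs_int
  set σt : ℝ → ℝ := (Icc 0 L).indicator σ with hσt_def
  have hσt_int : Integrable σt := (integrable_indicator_iff measurableSet_Icc).2 hσint
  have hG_cont : Continuous (fun t => ∫ s in (0:ℝ)..t, σt s) := hσt_int.continuous_primitive 0
  have hF_cont : Continuous (fun t => ∫ s in (0:ℝ)..t, f s) := hf_int.continuous_primitive 0
  have hcongr : ∀ t ∈ Icc (0:ℝ) L, (∫ s in (0:ℝ)..t, σ s) = ∫ s in (0:ℝ)..t, σt s := by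
    intro t ht
    refine (intervalIntegral.integral_congr ?_).symm
    intro x hx
    rw [uIcc_of_le ht.1] at hx
    have hxL : x ∈ Icc (0:ℝ) L := ⟨hx.1, hx.2.trans ht.2⟩
    exact indicator_of_mem hxL σ
  have hcongr_s : ∀ t ∈ Icc (0:ℝ) L, (∫ s in (0:ℝ)..t, f s) = ∫ s in (0:ℝ)..t, σs s := by
    intro t ht
    refine intervalIntegral.integral_congr ?_
    intro x hx
    rw [uIcc_of_le ht.1] at hx
    have hxL : x ∈ Icc (0:ℝ) L := ⟨hx.1, hx.2.trans ht.2⟩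
    exact indicator_of_mem hxL σs
  -- pointwise comparison on Ioc 0 L
  have hpt : ∀ t ∈ Ioc (0:ℝ) L, σs t * Real.exp (-(∫ s in (0:ℝ)..t, σ s))
      ≤ f t * Real.exp (-(∫ s in (0:ℝ)..t, f s)) := by
    intro t ht
    have htI : t ∈ Icc (0:ℝ) L := ⟨ht.1.le, ht.2⟩
    have hft : f t = σs t := indicator_of_mem htI σs
    have hIcc : Icc (0:ℝ) t ⊆ Icc 0 L := Icc_subset_Icc le_rfl htI.2
    have hint_s : IntervalIntegrable σs volume 0 t := by
      have h := hσs_int.mono_set hIcc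
      rw [← uIcc_of_le htI.1] at h
      exact h.intervalIntegrable
    have hint_σ : IntervalIntegrable σ volume 0 t := by
      have h := hσint.mono_set hIcc
      rw [← uIcc_of_le htI.1] at h
      exact h.intervalIntegrable
    have h1 : (∫ s in (0:ℝ)..t, f s) ≤ ∫ s in (0:ℝ)..t, σ s := by
      rw [hcongr_s t htI]
      refine intervalIntegral.integral_mono_on htI.1 hint_s hint_σ fun x hx => hle x (hIcc hx)
    have h2 : Real.exp (-(∫ s in (0:ℝ)..t, σ s)) ≤ Real.exp (-(∫ s in (0:ℝ)..t, f s)) :=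
      Real.exp_le_exp.2 (by linarith)
    rw [hft]
    exact mul_le_mul_of_nonneg_left h2 (hσs_nonneg t htI)
  have hexp_le_one : ∀ t ∈ Ioc (0:ℝ) L, Real.exp (-(∫ s in (0:ℝ)..t, σ s)) ≤ 1 := by
    intro t ht
    have htI : t ∈ Icc (0:ℝ) L := ⟨ht.1.le, ht.2⟩
    have hIcc : Icc (0:ℝ) t ⊆ Icc 0 L := Icc_subset_Icc le_rfl htI.2
    have h0 : 0 ≤ ∫ s in (0:ℝ)..t, σ s :=
      intervalIntegral.integral_nonneg htI.1 fun x hx => hσ_nonneg x (hIcc hx)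
    calc Real.exp (-(∫ s in (0:ℝ)..t, σ s)) ≤ Real.exp 0 := Real.exp_le_exp.2 (by linarith)
      _ = 1 := Real.exp_zero
  have hexp_le_one' : ∀ t ∈ Ioc (0:ℝ) L, Real.exp (-(∫ s in (0:ℝ)..t, f s)) ≤ 1 := by
    intro t ht
    have h0 : 0 ≤ ∫ s in (0:ℝ)..t, f s :=
      intervalIntegral.integral_nonneg ht.1.le fun x _ => hf_nonneg x
    calc Real.exp (-(∫ s in (0:ℝ)..t, f s)) ≤ Real.exp 0 := Real.exp_le_exp.2 (by linarith)
      _ = 1 := Real.exp_zero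
  have hmeasG : AEStronglyMeasurable (fun t => σs t * Real.exp (-(∫ s in (0:ℝ)..t, σ s)))
      (volume.restrict (Ioc 0 L)) := by
    have hcont : AEStronglyMeasurable (fun t => σs t * Real.exp (-(∫ s in (0:ℝ)..t, σt s)))
        (volume.restrict (Ioc 0 L)) :=
      (hσsmeas.aestronglyMeasurable.mul
        ((Real.continuous_exp.comp hG_cont.neg).aestronglyMeasurable)).restrict
    refine hcont.congr ?_
    rw [Filter.EventuallyEq, ae_restrict_iff' measurableSet_Ioc]
    filter_upwards with t ht
    rw [hcongr t ⟨ht.1.le, ht.2⟩]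
  have hint1 : IntegrableOn (fun t => σs t * Real.exp (-(∫ s in (0:ℝ)..t, σ s))) (Ioc 0 L) := by
    refine Integrable.mono (hσs_int.mono_set Ioc_subset_Icc_self) hmeasG ?_
    rw [ae_restrict_iff' measurableSet_Ioc]
    filter_upwards with t ht
    have htI : t ∈ Icc (0:ℝ) L := ⟨ht.1.le, ht.2⟩
    rw [Real.norm_eq_abs, Real.norm_eq_abs, abs_mul, abs_of_nonneg (Real.exp_nonneg _)]
    calc |σs t| * Real.exp (-(∫ s in (0:ℝ)..t, σ s)) ≤ |σs t| * 1 :=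
          mul_le_mul_of_nonneg_left (hexp_le_one t ht) (abs_nonneg _)
      _ = |σs t| := mul_one _
  have hint2 : IntegrableOn (fun x => f x * Real.exp (-(∫ s in (0:ℝ)..x, f s))) (Ioc 0 L) := by
    refine Integrable.mono (hf_int.restrict) ((hf_meas.aestronglyMeasurable.mul
      ((Real.continuous_exp.comp hF_cont.neg).aestronglyMeasurable)).restrict) ?_
    rw [ae_restrict_iff' measurableSet_Ioc]
    filter_upwards with t ht
    rw [Real.norm_eq_abs, Real.norm_eq_abs, abs_mul, abs_of_nonneg (Real.exp_nonneg _)]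
    calc |f t| * Real.exp (-(∫ s in (0:ℝ)..t, f s)) ≤ |f t| * 1 :=
          mul_le_mul_of_nonneg_left (hexp_le_one' t ht) (abs_nonneg _)
      _ = |f t| := mul_one _
  have hmain := aux_primitive_exp f L hL hf_meas hf_nonneg hf_int
  have hFL : (∫ s in (0:ℝ)..L, f s) ≤ M * L := by
    rw [intervalIntegral.integral_of_le hL]
    have h1 : (∫ x in Ioc (0:ℝ) L, f x) ≤ ∫ _x in Ioc (0:ℝ) L, M := by
      refine integral_mono_ae (hf_int.restrict) (integrable_const M) ?_
      have hM' : ∀ᵐ s ∂(volume.restrict (Ioc (0:ℝ) L)), σs s ≤ M :=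
        ae_restrict_of_ae_restrict_of_subset Ioc_subset_Icc_self hM
      filter_upwards [hM', ae_restrict_mem measurableSet_Ioc] with x h1 h2
      have hxL : x ∈ Icc (0:ℝ) L := ⟨h2.1.le, h2.2⟩
      rw [hf_def, indicator_of_mem hxL]
      exact h1
    have h2 : (∫ _x in Ioc (0:ℝ) L, M) = M * L := by
      rw [setIntegral_const, Real.volume_real_Ioc, smul_eq_mul, sub_zero,
        max_eq_left hL, mul_comm]
    linarith
  have hexpM : Real.exp (-(M*L)) ≤ Real.exp (-(∫ s in (0:ℝ)..L, f s)) :=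
    Real.exp_le_exp.2 (by linarith)
  rw [intervalIntegral.integral_mul_const, intervalIntegral.integral_of_le hL]
  have hstep : (∫ t in Ioc (0:ℝ) L, σs t * Real.exp (-(∫ s in (0:ℝ)..t, σ s)))
      ≤ 1 - Real.exp (-(M*L)) := by
    calc (∫ t in Ioc (0:ℝ) L, σs t * Real.exp (-(∫ s in (0:ℝ)..t, σ s)))
        ≤ ∫ x in Ioc (0:ℝ) L, f x * Real.exp (-(∫ s in (0:ℝ)..x, f s)) :=
          setIntegral_mono_on hint1 hint2 measurableSet_Ioc hpt
      _ ≤ 1 - Real.exp (-(∫ s in (0:ℝ)..L, f s)) := hmain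
      _ ≤ 1 - Real.exp (-(M*L)) := by linarith
  exact mul_le_mul_of_nonneg_right hstep hg
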